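/- For ν = 2, the least positive integer r such that r · A_{k,j}(2) is an integer for all nonnegative integers j ≤ k equals 3 = C(3,2). Equivalently: 3 · A_{k,j}(2) ∈ ℤ for all j ≤ k, and for every positive integer r with r · A_{k,j}(2) ∈ ℤ for all j ≤ k, 3 divides r. -/

import Mathlib

/-- `A ν k j` is the rational number `A_{k,j}(ν) = C(k,j)·(k+ν)!·ν! / ((k−j+ν)!·(j+ν)!)`. -/
def A (ν k j : ℕ) : ℚ :=
  (Nat.choose k j : ℚ) * ((k + ν).factorial : ℚ) * (ν.factorial : ℚ) /
    (((k - j + ν).factorial : ℚ) * ((j + ν).factorial : ℚ))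

lemma key (j m' : ℕ) :
    (3 : ℚ) * A 2 (j + m' + 2) j =
      ((3 * ((j + m' + 2).choose j)^2
        + 4 * ((j + m' + 2).choose j) * ((j + m' + 2).choose (j+1))
        + ((j + m' + 2).choose j) * ((j + m' + 2).choose (j+2))
        + ((j + m' + 2).choose (j+2)) * ((j + m' + 4).choose j) : ℚ)
        - 4 * ((j + m' + 2).choose (j+1)) * ((j + m' + 3).choose j)
        - 2 * ((j + m' + 2).choose (j+2)) * ((j + m' + 3).choose j)) := by
  have hJ : (Nat.factorial j : ℚ) ≠ 0 := by exact_mod_cast (Nat.factorial_pos j).ne'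
  have hM : (Nat.factorial m' : ℚ) ≠ 0 := by exact_mod_cast (Nat.factorial_pos m').ne'
  have hF : (Nat.factorial (j + m' + 2) : ℚ) ≠ 0 := by
    exact_mod_cast (Nat.factorial_pos _).ne'
  have f1 : ((j+1).factorial : ℚ) = (j+1) * j.factorial := by
    rw [Nat.factorial_succ]; push_cast; ring
  have f2 : ((j+2).factorial : ℚ) = (j+2)*(j+1)*j.factorial := by
    rw [show j+2 = (j+1)+1 from rfl, Nat.factorial_succ]; push_cast [f1]; ring
  have g1 : ((m'+1).factorial : ℚ) = (m'+1) * m'.factorial := by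
    rw [Nat.factorial_succ]; push_cast; ring
  have g2 : ((m'+2).factorial : ℚ) = (m'+2)*(m'+1)*m'.factorial := by
    rw [show m'+2 = (m'+1)+1 from rfl, Nat.factorial_succ]; push_cast [g1]; ring
  have g3 : ((m'+3).factorial : ℚ) = (m'+3)*(m'+2)*(m'+1)*m'.factorial := by
    rw [show m'+3 = (m'+2)+1 from rfl, Nat.factorial_succ]; push_cast [g2]; ring
  have g4 : ((m'+4).factorial : ℚ) = (m'+4)*(m'+3)*(m'+2)*(m'+1)*m'.factorial := by
    rw [show m'+4 = (m'+3)+1 from rfl, Nat.factorial_succ]; push_cast [g3]; ring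
  have F1 : ((j+m'+3).factorial : ℚ) = (j+m'+3) * (j+m'+2).factorial := by
    rw [show j+m'+3 = (j+m'+2)+1 from rfl, Nat.factorial_succ]; push_cast; ring
  have F2 : ((j+m'+4).factorial : ℚ) = (j+m'+4)*(j+m'+3)*(j+m'+2).factorial := by
    rw [show j+m'+4 = (j+m'+3)+1 from rfl, Nat.factorial_succ]; push_cast [F1]; ring
  have c0 : (((j + m' + 2).choose j : ℕ) : ℚ)
      = (j+m'+2).factorial / (j.factorial * (m'+2).factorial) := by
    rw [Nat.cast_choose ℚ (show j ≤ j+m'+2 by omega),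
      show j+m'+2-j = m'+2 from by omega]
  have c1 : (((j + m' + 2).choose (j+1) : ℕ) : ℚ)
      = (j+m'+2).factorial / ((j+1).factorial * (m'+1).factorial) := by
    rw [Nat.cast_choose ℚ (show j+1 ≤ j+m'+2 by omega),
      show j+m'+2-(j+1) = m'+1 from by omega]
  have c2 : (((j + m' + 2).choose (j+2) : ℕ) : ℚ)
      = (j+m'+2).factorial / ((j+2).factorial * m'.factorial) := by
    rw [Nat.cast_choose ℚ (show j+2 ≤ j+m'+2 by omega),
      show j+m'+2-(j+2) = m' from by omega]
  have cD : (((j + m' + 3).choose j : ℕ) : ℚ)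
      = (j+m'+3).factorial / (j.factorial * (m'+3).factorial) := by
    rw [Nat.cast_choose ℚ (show j ≤ j+m'+3 by omega),
      show j+m'+3-j = m'+3 from by omega]
  have cE : (((j + m' + 4).choose j : ℕ) : ℚ)
      = (j+m'+4).factorial / (j.factorial * (m'+4).factorial) := by
    rw [Nat.cast_choose ℚ (show j ≤ j+m'+4 by omega),
      show j+m'+4-j = m'+4 from by omega]
  have hA : A 2 (j + m' + 2) j
      = ((j + m' + 2).choose j : ℚ) * ((j+m'+4).factorial : ℚ) * 2 /
        (((m'+4).factorial : ℚ) * ((j+2).factorial : ℚ)) := by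
    simp only [A, show j + m' + 2 - j = m' + 2 from by omega,
      show j + m' + 2 + 2 = j + m' + 4 from by omega,
      show m' + 2 + 2 = m' + 4 from by omega]
    rw [show ((2:ℕ).factorial : ℚ) = 2 from by norm_num [Nat.factorial]]
  rw [hA, c0, c1, c2, cD, cE, f1, f2, g1, g2, g3, g4, F1, F2]
  field_simp
  ring

/-- `3 · A_{k,j}(2)` is an integer for all `j ≤ k`, and any positive integer `r` with
`r · A_{k,j}(2)` an integer for all `j ≤ k` is divisible by `3`; i.e. `r₂ = 3 = C(3,2)`. -/
theorem stmt17 :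
    (∀ k j : ℕ, j ≤ k → ∃ z : ℤ, (3 : ℚ) * A 2 k j = (z : ℚ)) ∧
    (∀ r : ℕ, 0 < r → (∀ k j : ℕ, j ≤ k → ∃ z : ℤ, (r : ℚ) * A 2 k j = (z : ℚ)) →
      3 ∣ r) := by
  constructor
  · intro k j hjk
    rcases Nat.lt_or_ge k (j + 2) with hk | hk
    · -- k = j or k = j + 1 : compute directly
      rcases (show k = j ∨ k = j + 1 by omega) with h | h
      · rw [h]
        refine ⟨3, ?_⟩
        have h2 : ((j+2).factorial : ℚ) ≠ 0 := by
          exact_mod_cast (Nat.factorial_pos _).ne'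
        simp only [A, Nat.choose_self, Nat.sub_self, Nat.cast_one]
        rw [show (((0+2:ℕ)).factorial : ℚ) = 2 from by norm_num [Nat.factorial]]
        push_cast
        field_simp
      · rw [h]
        refine ⟨(j+1)*(j+3), ?_⟩
        have h2 : ((j+2).factorial : ℚ) ≠ 0 := by
          exact_mod_cast (Nat.factorial_pos _).ne'
        have hf : ((j+3).factorial : ℚ) = (j+3) * (j+2).factorial := by
          rw [show j+3 = (j+2)+1 from rfl, Nat.factorial_succ]; push_cast; ring
        simp only [A, show j + 1 - j = 1 from by omega,
          Nat.choose_succ_self_right, show j + 1 + 2 = j + 3 from rfl]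
        rw [show (((1+2:ℕ)).factorial : ℚ) = 6 from by norm_num [Nat.factorial],
          show ((2:ℕ).factorial : ℚ) = 2 from by norm_num [Nat.factorial], hf]
        push_cast
        field_simp
        ring
    · obtain ⟨m', rfl⟩ : ∃ m', k = j + m' + 2 := ⟨k - j - 2, by omega⟩
      refine ⟨(3 * ((j + m' + 2).choose j)^2
        + 4 * ((j + m' + 2).choose j) * ((j + m' + 2).choose (j+1))
        + ((j + m' + 2).choose j) * ((j + m' + 2).choose (j+2))
        + ((j + m' + 2).choose (j+2)) * ((j + m' + 4).choose j) : ℤ)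
        - 4 * ((j + m' + 2).choose (j+1)) * ((j + m' + 3).choose j)
        - 2 * ((j + m' + 2).choose (j+2)) * ((j + m' + 3).choose j), ?_⟩
      rw [key j m']
      push_cast
      ring
  · intro r hr h
    obtain ⟨z, hz⟩ := h 2 1 (by norm_num)
    have hA : A 2 2 1 = 8 / 3 := by
      norm_num [A, Nat.factorial]
    rw [hA] at hz
    have h8 : (8 * r : ℤ) = 3 * z := by
      have : ((8 * r : ℤ) : ℚ) = ((3 * z : ℤ) : ℚ) := by push_cast; linarith
      exact_mod_cast this
    have h3 : (3 : ℤ) ∣ (r : ℤ) := by omega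
    exact_mod_cast h3
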